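/- arXiv:2008.11343 — 2 statements merged into one kernel-verified Lean document; each statement's English description precedes it below -/
import Mathlib

section
/- Let E be a real normed vector space, β ∈ [0,1), and let (g_t)_{t≥0} be a sequence in E. Define m_t = (1-β) Σ_{s=0}^{t} β^{t-s} g_s for each t ≥ 0. Then for every T ≥ 0, Σ_{t=0}^{T} ‖m_t‖² ≤ Σ_{s=0}^{T} ‖g_s‖². -/
/-- Let `E` be a real normed vector space, `β ∈ [0,1)`, and `(g_t)_{t≥0}` a sequence in `E`.
Define `m_t = (1-β) ∑_{s=0}^t β^{t-s} g_s`. Then for every `T ≥ 0`,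
`∑_{t=0}^T ‖m_t‖² ≤ ∑_{s=0}^T ‖g_s‖²`. -/
theorem ema_squared_norm_sum_le
    {E : Type*} [NormedAddCommGroup E] [NormedSpace ℝ E]
    (β : ℝ) (hβ0 : 0 ≤ β) (hβ1 : β < 1)
    (g m : ℕ → E)
    (hm : ∀ t, m t = (1 - β) • ∑ s ∈ Finset.range (t + 1), β ^ (t - s) • g s)
    (T : ℕ) :
    ∑ t ∈ Finset.range (T + 1), ‖m t‖ ^ 2
      ≤ ∑ s ∈ Finset.range (T + 1), ‖g s‖ ^ 2 := by
  have hβ' : 0 ≤ 1 - β := by linarith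
  have hgeom : ∀ n : ℕ, (1 - β) * ∑ k ∈ Finset.range n, β ^ k ≤ 1 := by
    intro n
    have := geom_sum_mul β n
    nlinarith [pow_nonneg hβ0 n]
  -- key pointwise bound
  have key : ∀ t, ‖m t‖ ^ 2 ≤
      (1 - β) * ∑ s ∈ Finset.range (t + 1), β ^ (t - s) * ‖g s‖ ^ 2 := by
    intro t
    have h1 : ‖m t‖ ≤ (1 - β) * ∑ s ∈ Finset.range (t + 1), β ^ (t - s) * ‖g s‖ := by
      rw [hm t, norm_smul, Real.norm_of_nonneg hβ']
      gcongr
      refine (norm_sum_le _ _).trans_eq ?_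
      refine Finset.sum_congr rfl fun s _ => ?_
      rw [norm_smul, Real.norm_of_nonneg (pow_nonneg hβ0 _)]
    have hCS : (∑ s ∈ Finset.range (t + 1), β ^ (t - s) * ‖g s‖) ^ 2 ≤
        (∑ s ∈ Finset.range (t + 1), β ^ (t - s)) *
          ∑ s ∈ Finset.range (t + 1), β ^ (t - s) * ‖g s‖ ^ 2 := by
      refine Finset.sum_sq_le_sum_mul_sum_of_sq_eq_mul _
        (fun i _ => pow_nonneg hβ0 _)
        (fun i _ => mul_nonneg (pow_nonneg hβ0 _) (sq_nonneg _)) (fun i _ => by ring)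
    have hsum : (1 - β) * ∑ s ∈ Finset.range (t + 1), β ^ (t - s) ≤ 1 := by
      have heq := Finset.sum_range_reflect (fun k => β ^ k) (t + 1)
      simp only [Nat.add_sub_cancel] at heq
      rw [heq]
      exact hgeom (t + 1)
    have hnn : 0 ≤ ∑ s ∈ Finset.range (t + 1), β ^ (t - s) * ‖g s‖ :=
      Finset.sum_nonneg fun s _ => mul_nonneg (pow_nonneg hβ0 _) (norm_nonneg _)
    have hnn2 : 0 ≤ ∑ s ∈ Finset.range (t + 1), β ^ (t - s) * ‖g s‖ ^ 2 :=
      Finset.sum_nonneg fun s _ => mul_nonneg (pow_nonneg hβ0 _) (sq_nonneg _)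
    calc ‖m t‖ ^ 2 ≤ ((1 - β) * ∑ s ∈ Finset.range (t + 1), β ^ (t - s) * ‖g s‖) ^ 2 := by
          have := norm_nonneg (m t)
          nlinarith
      _ = (1 - β) ^ 2 * (∑ s ∈ Finset.range (t + 1), β ^ (t - s) * ‖g s‖) ^ 2 := by ring
      _ ≤ (1 - β) ^ 2 * ((∑ s ∈ Finset.range (t + 1), β ^ (t - s)) *
            ∑ s ∈ Finset.range (t + 1), β ^ (t - s) * ‖g s‖ ^ 2) := by
          exact mul_le_mul_of_nonneg_left hCS (sq_nonneg _)
      _ = ((1 - β) * ∑ s ∈ Finset.range (t + 1), β ^ (t - s)) *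
            ((1 - β) * ∑ s ∈ Finset.range (t + 1), β ^ (t - s) * ‖g s‖ ^ 2) := by ring
      _ ≤ 1 * ((1 - β) * ∑ s ∈ Finset.range (t + 1), β ^ (t - s) * ‖g s‖ ^ 2) := by
          exact mul_le_mul_of_nonneg_right hsum (mul_nonneg hβ' hnn2)
      _ = _ := one_mul _
  calc ∑ t ∈ Finset.range (T + 1), ‖m t‖ ^ 2
      ≤ ∑ t ∈ Finset.range (T + 1),
          (1 - β) * ∑ s ∈ Finset.range (t + 1), β ^ (t - s) * ‖g s‖ ^ 2 :=
        Finset.sum_le_sum fun t _ => key t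
    _ = (1 - β) * ∑ t ∈ Finset.range (T + 1),
          ∑ s ∈ Finset.range (t + 1), β ^ (t - s) * ‖g s‖ ^ 2 := by
        rw [Finset.mul_sum]
    _ = (1 - β) * ∑ s ∈ Finset.range (T + 1),
          ∑ k ∈ Finset.range (T + 1 - s), β ^ k * ‖g s‖ ^ 2 := by
        rw [Finset.sum_range_diag_flip (T + 1) (fun k j => β ^ j * ‖g k‖ ^ 2)]
    _ = ∑ s ∈ Finset.range (T + 1),
          ((1 - β) * ∑ k ∈ Finset.range (T + 1 - s), β ^ k) * ‖g s‖ ^ 2 := by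
        rw [Finset.mul_sum]
        refine Finset.sum_congr rfl fun s _ => ?_
        rw [← Finset.sum_mul, mul_assoc]
    _ ≤ ∑ s ∈ Finset.range (T + 1), 1 * ‖g s‖ ^ 2 :=
        Finset.sum_le_sum fun s _ =>
          mul_le_mul_of_nonneg_right (hgeom _) (sq_nonneg _)
    _ = _ := by simp
end

section
/- Let E be a real vector space, β ≠ 1 a real number, γ a real number, and let (x_t)_{t≥0}, (m_t)_{t≥0}, (g_t)_{t≥0}, (δ_t)_{t≥0} be sequences in E satisfying, for all t ≥ 0, the updates m_{t+1} = β m_t + (1-β) g_{t+1} + δ_t - δ_{t+1} and x_{t+1} = x_t - γ m_t. Define the auxiliary sequence y_t = x_t - (γ/(1-β)) (m_t + δ_t). Then for every t ≥ 0, y_{t+1} - y_t = -γ g_{t+1}. -/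
/-- For the error-compensated momentum SGD updates
`m_{t+1} = β m_t + (1-β) g_{t+1} + δ_t - δ_{t+1}` and `x_{t+1} = x_t - γ m_t`,
the auxiliary sequence `y_t = x_t - (γ/(1-β)) (m_t + δ_t)` satisfies
`y_{t+1} - y_t = -γ g_{t+1}` for every `t ≥ 0`. -/
theorem auxiliary_sequence_sgd_step
    {E : Type*} [AddCommGroup E] [Module ℝ E]
    (β γ : ℝ) (hβ : β ≠ 1)
    (x m g δ : ℕ → E)
    (hm : ∀ t, m (t + 1) = β • m t + (1 - β) • g (t + 1) + (δ t - δ (t + 1)))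
    (hx : ∀ t, x (t + 1) = x t - γ • m t)
    (y : ℕ → E)
    (hy : ∀ t, y t = x t - (γ / (1 - β)) • (m t + δ t))
    (t : ℕ) :
    y (t + 1) - y t = -(γ • g (t + 1)) := by
  have h1 : (1 : ℝ) - β ≠ 0 := sub_ne_zero.mpr (Ne.symm hβ)
  have hc : γ / (1 - β) * (1 - β) = γ := div_mul_cancel₀ γ h1
  have hb : γ / (1 - β) * β = γ / (1 - β) - γ := by
    field_simp; ring
  rw [hy, hy, hx, hm]
  rw [smul_add, smul_add, smul_add, smul_sub, smul_smul, smul_smul, hc, hb, sub_smul]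
  module
end
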